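/- Let Φ:ℝ^{n_x}×ℝ^{n_u}→ℝ^d be Lipschitz continuous near (x̄,ū), let U⊆ℝ^{n_u} and Ω⊆ℝ^d be closed, and let (x̄,ū)∈M(0) where M(Θ)={(x,u)∈ℝ^{n_x}×U : Φ(x,u)+Θ∈Ω}. Then the following implications hold: (1) the CCQ at (x̄,ū) implies the MFC at (x̄,ū); (2) the MFC at (x̄,ū) holds if and only if both the WBCQ and the NNAMCQ hold at (x̄,ū); (3) the WBCQ together with the NNAMCQ at (x̄,ū) implies the WBCQ at (x̄,ū) together with calmness of M at (0,x̄,ū). -/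

import Mathlib

open Filter Topology Set MeasureTheory
open scoped RealInnerProductSpace ENNReal NNReal

noncomputable section

abbrev Euc (n : ℕ) : Type := EuclideanSpace ℝ (Fin n)

abbrev PL2 (α β : Type) : Type := WithLp 2 (α × β)

abbrev PL3 (α β γ : Type) : Type := PL2 α (PL2 β γ)

def pl2 {α β : Type} (a : α) (b : β) : PL2 α β := (WithLp.equiv 2 (α × β)).symm (a, b)

def pl2fst {α β : Type} (z : PL2 α β) : α := (WithLp.equiv 2 (α × β) z).1

def pl2snd {α β : Type} (z : PL2 α β) : β := (WithLp.equiv 2 (α × β) z).2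

def pl3 {α β γ : Type} (a : α) (b : β) (c : γ) : PL3 α β γ := pl2 a (pl2 b c)

section Variational

variable {E : Type} [NormedAddCommGroup E] [InnerProductSpace ℝ E]

/-- Fréchet normal cone. -/
def frechetNC (C : Set E) (x : E) : Set E :=
  {v | ∀ ε > 0, ∃ δ > 0, ∀ y ∈ C, ‖y - x‖ < δ → ⟪v, y - x⟫ ≤ ε * ‖y - x‖}

/-- Limiting (Mordukhovich) normal cone. -/
def limitingNC (C : Set E) (x : E) : Set E :=
  {v | ∃ xs vs : ℕ → E, (∀ n, xs n ∈ C ∧ vs n ∈ frechetNC C (xs n)) ∧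
      Tendsto xs atTop (𝓝 x) ∧ Tendsto vs atTop (𝓝 v)}

/-- Clarke normal cone: closed convex hull of the limiting normal cone. -/
def clarkeNC (C : Set E) (x : E) : Set E := closure (convexHull ℝ (limitingNC C x))

def NormallyRegular (C : Set E) : Prop := ∀ x ∈ C, frechetNC C x = limitingNC C x

/-- Proximal subdifferential of a real-valued function. -/
def proxSubdiff (g : E → ℝ) (x : E) : Set E :=
  {ζ | ∃ σ > 0, ∃ δ > 0, ∀ y, ‖y - x‖ < δ →
    g x + ⟪ζ, y - x⟫ - σ * ‖y - x‖ ^ 2 ≤ g y}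

/-- Limiting (Mordukhovich) subdifferential. -/
def limSubdiff (g : E → ℝ) (x : E) : Set E :=
  {ζ | ∃ xs ζs : ℕ → E, (∀ n, ζs n ∈ proxSubdiff g (xs n)) ∧
      Tendsto xs atTop (𝓝 x) ∧ Tendsto (fun n => g (xs n)) atTop (𝓝 (g x)) ∧
      Tendsto ζs atTop (𝓝 ζ)}

/-- Clarke generalized gradient: convex hull of the limiting subdifferential. -/
def clarkeSubdiff (g : E → ℝ) (x : E) : Set E := convexHull ℝ (limSubdiff g x)

/-- Tangent (contingent) cone. -/
def tangentC (C : Set E) (x : E) : Set E :=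
  {w | ∃ (t : ℕ → ℝ) (ws : ℕ → E), (∀ n, 0 < t n ∧ x + t n • ws n ∈ C) ∧
      Tendsto t atTop (𝓝 0) ∧ Tendsto ws atTop (𝓝 w)}

/-- Directional limiting normal cone in direction `w`. -/
def dirLimitingNC (C : Set E) (x : E) (w : E) : Set E :=
  {v | ∃ (t : ℕ → ℝ) (ws vs : ℕ → E),
      (∀ n, 0 < t n ∧ vs n ∈ frechetNC C (x + t n • ws n)) ∧
      Tendsto t atTop (𝓝 0) ∧ Tendsto ws atTop (𝓝 w) ∧ Tendsto vs atTop (𝓝 v)}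

end Variational

section Maps

variable {F G : Type} [NormedAddCommGroup F] [NormedAddCommGroup G]

/-- Calmness of a set-valued map at a point of its graph (neighborhood-ball form). -/
def Calm (Ψ : F → Set G) (x₀ : F) (y₀ : G) : Prop :=
  ∃ μ : ℝ, 0 ≤ μ ∧ ∃ Ux ∈ 𝓝 x₀, ∃ Vy ∈ 𝓝 y₀,
    ∀ x ∈ Ux, ∀ y ∈ Ψ x ∩ Vy, ∃ z ∈ Ψ x₀, ‖y - z‖ ≤ μ * ‖x - x₀‖

/-- Upper Lipschitz continuity at a point. -/
def UpperLipschitzAt (Ψ : F → Set G) (x₀ : F) : Prop :=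
  ∃ μ : ℝ, 0 ≤ μ ∧ ∃ Ux ∈ 𝓝 x₀,
    ∀ x ∈ Ux, ∀ y ∈ Ψ x, ∃ z ∈ Ψ x₀, ‖y - z‖ ≤ μ * ‖x - x₀‖

end Maps

/-- An absolutely continuous arc on `[t0,t1]` with values in `ℝ^n`,
recorded together with its a.e. derivative. -/
structure Arc (n : ℕ) (t0 t1 : ℝ) where
  f : ℝ → Euc n
  d : ℝ → Euc n
  intble : IntervalIntegrable d volume t0 t1
  rel : ∀ t ∈ Set.Icc t0 t1, f t = f t0 + ∫ s in t0..t, d s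



section AuxLemmas

variable {E : Type} [NormedAddCommGroup E] [InnerProductSpace ℝ E]

lemma proxSubdiff_zero {x ζ : E} (h : ζ ∈ proxSubdiff (fun _ => (0:ℝ)) x) : ζ = 0 := by
  obtain ⟨σ, hσ, δ, hδ, h⟩ := h
  by_contra hζ
  have hζ' : 0 < ‖ζ‖ := norm_pos_iff.mpr hζ
  set t : ℝ := min (δ / (2 * ‖ζ‖)) (1 / (2 * σ)) with ht
  have htpos : 0 < t := lt_min (by positivity) (by positivity)
  have hyx : (x + t • ζ) - x = t • ζ := by abel
  have h1 : ‖(x + t • ζ) - x‖ < δ := by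
    rw [hyx, norm_smul, Real.norm_eq_abs, abs_of_pos htpos]
    calc t * ‖ζ‖ ≤ (δ / (2 * ‖ζ‖)) * ‖ζ‖ := by
          apply mul_le_mul_of_nonneg_right (min_le_left _ _) hζ'.le
      _ = δ / 2 := by field_simp
      _ < δ := by linarith
  have h2 := h (x + t • ζ) h1
  rw [hyx, real_inner_smul_right, real_inner_self_eq_norm_sq, norm_smul,
    Real.norm_eq_abs, abs_of_pos htpos] at h2
  have h3 : t * ‖ζ‖ ^ 2 - σ * (t * ‖ζ‖) ^ 2 ≤ 0 := by linarith
  have h4 : σ * t ≤ 1 / 2 := by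
    have := min_le_right (δ / (2 * ‖ζ‖)) (1 / (2 * σ))
    rw [← ht] at this
    calc σ * t ≤ σ * (1 / (2 * σ)) := by nlinarith
      _ = 1 / 2 := by field_simp
  nlinarith [h3, mul_le_mul_of_nonneg_right h4 (by positivity : (0:ℝ) ≤ t * ‖ζ‖^2),
    mul_pos htpos (pow_pos hζ' 2)]

lemma limSubdiff_zero {x ζ : E} (h : ζ ∈ limSubdiff (fun _ => (0:ℝ)) x) : ζ = 0 := by
  obtain ⟨xs, ζs, hmem, _, _, hζ⟩ := h
  have hz : ∀ n, ζs n = 0 := fun n => proxSubdiff_zero (hmem n)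
  have h0 : Tendsto ζs atTop (𝓝 0) := by
    have : ζs = fun _ => 0 := funext hz
    rw [this]; exact tendsto_const_nhds
  exact tendsto_nhds_unique hζ h0

lemma mem_frechetNC_of_quad {C : Set E} {x v : E} {c : ℝ} (hc : 0 ≤ c)
    (h : ∀ y ∈ C, ⟪v, y - x⟫ ≤ c * ‖y - x‖ ^ 2) : v ∈ frechetNC C x := by
  intro ε hε
  refine ⟨ε / (c + 1), by positivity, fun y hy hlt => ?_⟩
  calc ⟪v, y - x⟫ ≤ c * ‖y - x‖ ^ 2 := h y hy
    _ = (c * ‖y - x‖) * ‖y - x‖ := by ring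
    _ ≤ ε * ‖y - x‖ := by
        apply mul_le_mul_of_nonneg_right _ (norm_nonneg _)
        calc c * ‖y - x‖ ≤ c * (ε / (c + 1)) := by nlinarith [norm_nonneg (y - x)]
          _ ≤ ε := by rw [mul_div_assoc']; rw [div_le_iff₀ (by linarith)]; nlinarith

lemma perturb_prox [FiniteDimensional ℝ E]
    (g : E → ℝ) (w ζ : E) (σ ε ρ₀ : ℝ) (hσ : 1 ≤ σ) (hε : 0 ≤ ε) (hρ : 0 < ρ₀)
    (hερ : ε < σ * ρ₀) (hg : ContinuousOn g (Metric.closedBall w ρ₀))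
    (hineq : ∀ z, ‖z - w‖ ≤ ρ₀ → g w + ⟪ζ, z - w⟫ - σ * ‖z - w‖ ^ 2 - ε * ‖z - w‖ ≤ g z) :
    ∃ w' ζ', ‖w' - w‖ ≤ ε ∧ ζ' ∈ proxSubdiff g w' ∧ ‖ζ' - ζ‖ ≤ 4 * ε := by
  have hσ0 : 0 < σ := by linarith
  set h : E → ℝ := fun z => g z - ⟪ζ, z - w⟫ + 2 * σ * ‖z - w‖ ^ 2 with hh
  have hcont : ContinuousOn h (Metric.closedBall w ρ₀) := by
    apply ContinuousOn.add
    · exact hg.sub (Continuous.continuousOn (by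
        exact ((innerSL ℝ ζ).continuous.comp (continuous_id.sub continuous_const))))
    · exact Continuous.continuousOn (by continuity)
  obtain ⟨w', hw'mem, hmin⟩ := (isCompact_closedBall w ρ₀).exists_isMinOn
    ⟨w, Metric.mem_closedBall_self hρ.le⟩ hcont
  have hmin' : ∀ z ∈ Metric.closedBall w ρ₀, h w' ≤ h z := fun z hz => hmin hz
  have hhw : h w = g w := by simp [hh]
  have hlow : ∀ z ∈ Metric.closedBall w ρ₀, g w + σ * ‖z - w‖ ^ 2 - ε * ‖z - w‖ ≤ h z := by
    intro z hz
    have hz' : ‖z - w‖ ≤ ρ₀ := by rwa [Metric.mem_closedBall, dist_eq_norm] at hz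
    have := hineq z hz'
    simp only [hh]
    nlinarith [this]
  set d : ℝ := ‖w' - w‖ with hd
  have hd0 : 0 ≤ d := norm_nonneg _
  have hup : h w' ≤ g w := by rw [← hhw]; exact hmin' w (Metric.mem_closedBall_self hρ.le)
  have hkey : σ * d ^ 2 - ε * d ≤ 0 := by
    have := hlow w' hw'mem; linarith
  have hdε : σ * d ≤ ε := by
    rcases eq_or_lt_of_le hd0 with h0 | h0
    · rw [← h0]; simpa using hε
    · nlinarith
  have hdlt : d < ρ₀ := by
    by_contra hcon
    push_neg at hcon
    nlinarith
  refine ⟨w', ζ - (4 * σ) • (w' - w), ?_, ⟨2 * σ, by linarith, ρ₀ - d, by linarith, ?_⟩, ?_⟩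
  · calc d ≤ σ * d := by nlinarith
      _ ≤ ε := hdε
  · intro y hy
    have hymem : y ∈ Metric.closedBall w ρ₀ := by
      rw [Metric.mem_closedBall, dist_eq_norm]
      have h5 : y - w = (y - w') + (w' - w) := by abel
      calc ‖y - w‖ ≤ ‖y - w'‖ + ‖w' - w‖ := by rw [h5]; exact norm_add_le _ _
        _ ≤ ρ₀ := by linarith
    have hmy := hmin' y hymem
    simp only [hh] at hmy
    have hid : ‖y - w‖ ^ 2 = ‖w' - w‖ ^ 2 + 2 * ⟪w' - w, y - w'⟫ + ‖y - w'‖ ^ 2 := by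
      have hsplit : y - w = (y - w') + (w' - w) := by abel
      rw [hsplit, norm_add_sq_real, real_inner_comm]; ring
    have hid2 : ⟪ζ, y - w⟫ = ⟪ζ, y - w'⟫ + ⟪ζ, w' - w⟫ := by
      rw [← inner_add_right]; congr 1; abel
    have hid3 : ⟪ζ - (4 * σ) • (w' - w), y - w'⟫
        = ⟪ζ, y - w'⟫ - 4 * σ * ⟪w' - w, y - w'⟫ := by
      rw [inner_sub_left, real_inner_smul_left]
    rw [hid3]
    nlinarith [hmy, hid, hid2]
  · have h6 : ζ - (4 * σ) • (w' - w) - ζ = -((4 * σ) • (w' - w)) := by abel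
    rw [h6, norm_neg, norm_smul, Real.norm_eq_abs, abs_of_pos (by linarith : (0:ℝ) < 4 * σ)]
    calc 4 * σ * ‖w' - w‖ = 4 * (σ * d) := by rw [hd]; ring
      _ ≤ 4 * ε := by linarith

end AuxLemmas

section PL2Lemmas

set_option linter.unusedSectionVars false

variable {α β : Type} [NormedAddCommGroup α] [InnerProductSpace ℝ α]
  [NormedAddCommGroup β] [InnerProductSpace ℝ β]

lemma pl2_norm_sq (x : PL2 α β) : ‖x‖ ^ 2 = ‖pl2fst x‖ ^ 2 + ‖pl2snd x‖ ^ 2 :=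
  WithLp.prod_norm_sq_eq_of_L2 x

lemma pl2_inner (x y : PL2 α β) : ⟪x, y⟫ = ⟪pl2fst x, pl2fst y⟫ + ⟪pl2snd x, pl2snd y⟫ := rfl

lemma pl2_norm_fst (a : α) : ‖pl2 a (0:β)‖ = ‖a‖ := by
  have h := pl2_norm_sq (pl2 a (0:β))
  have h1 : pl2fst (pl2 a (0:β)) = a := rfl
  have h2 : pl2snd (pl2 a (0:β)) = (0:β) := rfl
  rw [h1, h2, norm_zero] at h
  exact (pow_left_inj₀ (norm_nonneg _) (norm_nonneg _) two_ne_zero).mp (by linarith)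

lemma pl2_norm_snd (b : β) : ‖pl2 (0:α) b‖ = ‖b‖ := by
  have h := pl2_norm_sq (pl2 (0:α) b)
  have h1 : pl2fst (pl2 (0:α) b) = (0:α) := rfl
  have h2 : pl2snd (pl2 (0:α) b) = b := rfl
  rw [h1, h2, norm_zero] at h
  exact (pow_left_inj₀ (norm_nonneg _) (norm_nonneg _) two_ne_zero).mp (by linarith)

lemma pl2fst_norm_le (x : PL2 α β) : ‖pl2fst x‖ ≤ ‖x‖ := by
  have h := pl2_norm_sq x
  nlinarith [norm_nonneg (pl2fst x), norm_nonneg (pl2snd x), norm_nonneg x, sq_nonneg ‖pl2snd x‖]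

lemma pl2snd_norm_le (x : PL2 α β) : ‖pl2snd x‖ ≤ ‖x‖ := by
  have h := pl2_norm_sq x
  nlinarith [norm_nonneg (pl2fst x), norm_nonneg (pl2snd x), norm_nonneg x]

lemma pl2fst_continuous : Continuous (pl2fst : PL2 α β → α) := by
  have : (pl2fst : PL2 α β → α) = Prod.fst ∘ (WithLp.equiv 2 _) := rfl
  rw [this]; exact continuous_fst.comp (WithLp.prod_continuous_ofLp _ _ _)

lemma pl2snd_continuous : Continuous (pl2snd : PL2 α β → β) := by
  have : (pl2snd : PL2 α β → β) = Prod.snd ∘ (WithLp.equiv 2 _) := rfl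
  rw [this]; exact continuous_snd.comp (WithLp.prod_continuous_ofLp _ _ _)

lemma pl2_sub (a b : α) (c d : β) : pl2 a c - pl2 b d = pl2 (a - b) (c - d) := rfl
@[simp] lemma pl2fst_pl2 (a : α) (b : β) : pl2fst (pl2 a b) = a := rfl
@[simp] lemma pl2snd_pl2 (a : α) (b : β) : pl2snd (pl2 a b) = b := rfl
lemma pl2_sub_eta (a : α) (b : β) (x : PL2 α β) :
    pl2 a b - x = pl2 (a - pl2fst x) (b - pl2snd x) := rfl
lemma pl2_add (a b : α) (c d : β) : pl2 a c + pl2 b d = pl2 (a + b) (c + d) := rfl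
lemma pl2_zero : pl2 (0:α) (0:β) = 0 := rfl
lemma pl2_eta (x : PL2 α β) : pl2 (pl2fst x) (pl2snd x) = x := rfl
lemma pl2snd_sub (x y : PL2 α β) : pl2snd x - pl2snd y = pl2snd (x - y) := rfl

end PL2Lemmas

namespace Stmt10

variable {nx nu d : ℕ}

/-- `(α,β) ∈ ∂⟨λ,Φ⟩(x̄,ū) + {0} × N_U(ū)`. -/
def MultEq (Φ : PL2 (Euc nx) (Euc nu) → Euc d) (Uset : Set (Euc nu))
    (xbar : Euc nx) (ubar : Euc nu) (lam : Euc d) (α : Euc nx) (β : Euc nu) : Prop :=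
  ∃ a ∈ limSubdiff (fun z => ⟪lam, Φ z⟫) (pl2 xbar ubar),
    ∃ η ∈ limitingNC Uset ubar, pl2 α β = a + pl2 0 η

/-- Calibrated constraint qualification. -/
def CCQ (Φ : PL2 (Euc nx) (Euc nu) → Euc d) (Uset : Set (Euc nu)) (Om : Set (Euc d))
    (xbar : Euc nx) (ubar : Euc nu) : Prop :=
  ∃ μ > (0:ℝ), ∀ (lam : Euc d) (α : Euc nx) (β : Euc nu),
    lam ∈ limitingNC Om (Φ (pl2 xbar ubar)) → MultEq Φ Uset xbar ubar lam α β →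
    ‖lam‖ ≤ μ * ‖β‖

/-- Mangasarian–Fromovitz condition. -/
def MFC (Φ : PL2 (Euc nx) (Euc nu) → Euc d) (Uset : Set (Euc nu)) (Om : Set (Euc d))
    (xbar : Euc nx) (ubar : Euc nu) : Prop :=
  ∀ (lam : Euc d) (α : Euc nx),
    lam ∈ limitingNC Om (Φ (pl2 xbar ubar)) → MultEq Φ Uset xbar ubar lam α 0 → lam = 0

/-- No nonzero abnormal multiplier constraint qualification. -/
def NNAMCQ (Φ : PL2 (Euc nx) (Euc nu) → Euc d) (Uset : Set (Euc nu)) (Om : Set (Euc d))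
    (xbar : Euc nx) (ubar : Euc nu) : Prop :=
  ∀ lam : Euc d,
    lam ∈ limitingNC Om (Φ (pl2 xbar ubar)) → MultEq Φ Uset xbar ubar lam 0 0 → lam = 0

/-- Weak basic constraint qualification. -/
def WBCQ (Φ : PL2 (Euc nx) (Euc nu) → Euc d) (Uset : Set (Euc nu)) (Om : Set (Euc d))
    (xbar : Euc nx) (ubar : Euc nu) : Prop :=
  ∀ (lam : Euc d) (α : Euc nx),
    lam ∈ limitingNC Om (Φ (pl2 xbar ubar)) → MultEq Φ Uset xbar ubar lam α 0 → α = 0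

set_option maxHeartbeats 4000000 in
set_option synthInstance.maxHeartbeats 1000000 in
/-- Implications among the constraint qualifications:
(1) CCQ ⟹ MFC; (2) MFC ⟺ WBCQ ∧ NNAMCQ; (3) WBCQ ∧ NNAMCQ ⟹ WBCQ together with
calmness of the perturbed constraint map `M(Θ) = {(x,u) ∈ ℝ^{n_x} × U : Φ(x,u)+Θ ∈ Ω}`
at `(0,(x̄,ū))`. -/
theorem cq_implications
    (Φ : PL2 (Euc nx) (Euc nu) → Euc d)
    (Uset : Set (Euc nu)) (Om : Set (Euc d))
    (hU : IsClosed Uset) (hOm : IsClosed Om)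
    (xbar : Euc nx) (ubar : Euc nu)
    (hΦ : ∃ (K : ℝ≥0) (s : Set (PL2 (Euc nx) (Euc nu))),
        s ∈ 𝓝 (pl2 xbar ubar) ∧ LipschitzOnWith K Φ s)
    (hfeas : ubar ∈ Uset ∧ Φ (pl2 xbar ubar) ∈ Om) :
    (CCQ Φ Uset Om xbar ubar → MFC Φ Uset Om xbar ubar) ∧
    (MFC Φ Uset Om xbar ubar ↔ WBCQ Φ Uset Om xbar ubar ∧ NNAMCQ Φ Uset Om xbar ubar) ∧
    (WBCQ Φ Uset Om xbar ubar ∧ NNAMCQ Φ Uset Om xbar ubar →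
      WBCQ Φ Uset Om xbar ubar ∧
      Calm (fun Θ : Euc d => {z : PL2 (Euc nx) (Euc nu) | pl2snd z ∈ Uset ∧ Φ z + Θ ∈ Om})
        0 (pl2 xbar ubar)) := by
  constructor
  · -- CCQ → MFC
    rintro ⟨μ, hμ, hccq⟩ lam α hlam hmult
    have h := hccq lam α 0 hlam hmult
    rw [norm_zero, mul_zero] at h
    exact norm_le_zero_iff.mp h
  constructor
  · -- MFC ↔ WBCQ ∧ NNAMCQ
    constructor
    · intro hMFC
      constructor
      · intro lam α hlam hmult
        have hl0 := hMFC lam α hlam hmult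
        subst hl0
        obtain ⟨a, ha, η, hη, heq⟩ := hmult
        have hz : (fun z => ⟪(0:Euc d), Φ z⟫) = fun _ => (0:ℝ) := by
          funext z; exact inner_zero_left _
        rw [hz] at ha
        have ha0 := limSubdiff_zero ha
        rw [ha0, zero_add] at heq
        exact congrArg pl2fst heq
      · intro lam hlam hmult
        exact hMFC lam 0 hlam hmult
    · rintro ⟨hW, hN⟩ lam α hlam hmult
      have hα := hW lam α hlam hmult
      subst hα
      exact hN lam hlam hmult
  · -- WBCQ ∧ NNAMCQ → WBCQ ∧ Calm
    rintro ⟨hW, hN⟩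
    refine ⟨hW, ?_⟩
    by_contra hC
    unfold Calm at hC
    push_neg at hC
    obtain ⟨K₀, s, hsnhds, hK₀⟩ := hΦ
    set zb : PL2 (Euc nx) (Euc nu) := pl2 xbar ubar with hzb
    set Kr : ℝ := max (K₀:ℝ) 1 with hKrdef
    have hKr1 : (1:ℝ) ≤ Kr := le_max_right _ _
    obtain ⟨ρ₁, hρ₁, hball⟩ := Metric.mem_nhds_iff.mp hsnhds
    set ρ : ℝ := min (ρ₁ / 2) 1 with hρdef
    have hρpos : 0 < ρ := lt_min (by linarith) one_pos
    have hρ1 : ρ ≤ 1 := min_le_right _ _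
    have hsub : Metric.closedBall zb ρ ⊆ s := by
      intro x hx
      apply hball
      rw [Metric.mem_ball]
      calc dist x zb ≤ ρ := Metric.mem_closedBall.mp hx
        _ ≤ ρ₁ / 2 := min_le_left _ _
        _ < ρ₁ := by linarith
    have hlip : ∀ a ∈ Metric.closedBall zb ρ, ∀ b ∈ Metric.closedBall zb ρ,
        ‖Φ a - Φ b‖ ≤ Kr * ‖a - b‖ := by
      intro a ha b hb
      have h1 := hK₀.dist_le_mul a (hsub ha) b (hsub hb)
      rw [dist_eq_norm, dist_eq_norm] at h1
      calc ‖Φ a - Φ b‖ ≤ (K₀:ℝ) * ‖a - b‖ := h1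
        _ ≤ Kr * ‖a - b‖ := mul_le_mul_of_nonneg_right (le_max_left _ _) (norm_nonneg _)
    have Hseq : ∀ n : ℕ, ∃ Θ : Euc d, ∃ z : PL2 (Euc nx) (Euc nu),
        ‖Θ‖ < ρ / (n + 3) ∧ (pl2snd z ∈ Uset ∧ Φ z + Θ ∈ Om) ∧ ‖z - zb‖ < ρ / (n + 3) ∧
        ∀ z' : PL2 (Euc nx) (Euc nu), pl2snd z' ∈ Uset → Φ z' ∈ Om →
          ((n:ℝ) + 3) * ‖Θ‖ < ‖z - z'‖ := by
      intro n
      have hpos : (0:ℝ) < ρ / (n + 3) := by positivity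
      obtain ⟨Θ, hΘ, y, hy, hfar⟩ := hC ((n:ℝ) + 3) (by positivity)
        (Metric.ball 0 (ρ / (n + 3))) (Metric.ball_mem_nhds _ hpos)
        (Metric.ball zb (ρ / (n + 3))) (Metric.ball_mem_nhds _ hpos)
      refine ⟨Θ, y, ?_, hy.1, ?_, ?_⟩
      · simpa [Metric.mem_ball, dist_zero_right] using hΘ
      · have := hy.2
        rwa [Metric.mem_ball, dist_eq_norm] at this
      · intro z' h1 h2
        have hz' : z' ∈ {z : PL2 (Euc nx) (Euc nu) | pl2snd z ∈ Uset ∧ Φ z + 0 ∈ Om} := by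
          refine ⟨h1, ?_⟩
          rwa [add_zero]
        have := hfar z' hz'
        rwa [sub_zero] at this
    choose Θs zs hΘs hzsmem hzsb hfar using Hseq
    have hrpos : ∀ n, 0 < ‖Θs n‖ := by
      intro n
      rcases eq_or_lt_of_le (norm_nonneg (Θs n)) with h0 | h0
      · exfalso
        have hz0 : Θs n = 0 := by rw [← norm_eq_zero]; exact h0.symm
        have h2 := (hzsmem n).2
        rw [hz0, add_zero] at h2
        have := hfar n (zs n) (hzsmem n).1 h2
        simp [hz0] at this
      · exact h0
    have hfar0 : ∀ n : ℕ, ((n:ℝ) + 3) * ‖Θs n‖ < ‖zs n - zb‖ := by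
      intro n
      exact hfar n zb hfeas.1 hfeas.2
    have hrsmall : ∀ n : ℕ, ((n:ℝ) + 3) * ‖Θs n‖ < ρ / (n + 3) :=
      fun n => (hfar0 n).trans (hzsb n)
    set Omt : Set (PL2 (Euc d) (Euc nu)) := {w | pl2fst w ∈ Om ∧ pl2snd w ∈ Uset} with hOmtdef
    have hOmtclosed : IsClosed Omt :=
      IsClosed.inter (hOm.preimage pl2fst_continuous) (hU.preimage pl2snd_continuous)
    have hOmtne : Omt.Nonempty := ⟨pl2 (Φ zb) ubar, hfeas.2, hfeas.1⟩
    set Φt : PL2 (Euc nx) (Euc nu) → PL2 (Euc d) (Euc nu) :=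
      fun z => pl2 (Φ z) (pl2snd z) with hΦtdef
    have hΦcont : ContinuousOn Φ (Metric.closedBall zb ρ) := hK₀.continuousOn.mono hsub
    have hΦtcont : ContinuousOn Φt (Metric.closedBall zb ρ) := by
      have h2 : Continuous (pl2snd : PL2 (Euc nx) (Euc nu) → Euc nu) := pl2snd_continuous
      exact (WithLp.prod_continuous_toLp _ _ _).comp_continuousOn
        (hΦcont.prodMk h2.continuousOn)
    have hΦtlip : ∀ a ∈ Metric.closedBall zb ρ, ∀ b ∈ Metric.closedBall zb ρ,
        ‖Φt a - Φt b‖ ≤ (Kr + 1) * ‖a - b‖ := by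
      intro a ha b hb
      have h1 : Φt a - Φt b = pl2 (Φ a - Φ b) (pl2snd a - pl2snd b) := pl2_sub _ _ _ _
      have h2 : ‖Φt a - Φt b‖ ^ 2 = ‖Φ a - Φ b‖ ^ 2 + ‖pl2snd a - pl2snd b‖ ^ 2 := by
        rw [h1]
        exact pl2_norm_sq _
      have h3 := hlip a ha b hb
      have h4 : ‖pl2snd a - pl2snd b‖ ≤ ‖a - b‖ := by
        rw [pl2snd_sub]; exact pl2snd_norm_le _
      nlinarith [norm_nonneg (Φt a - Φt b), norm_nonneg (a - b), norm_nonneg (Φ a - Φ b),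
        norm_nonneg (pl2snd a - pl2snd b), mul_le_mul h3 h3 (norm_nonneg _) (by positivity),
        mul_le_mul h4 h4 (norm_nonneg _) (norm_nonneg _)]
    set fval : ℕ → PL2 (Euc nx) (Euc nu) → ℝ :=
      fun n z => Metric.infDist (Φt z) Omt + (2 / ((n:ℝ) + 3)) * ‖z - zs n‖ with hfvaldef
    have Hmin : ∀ n : ℕ, ∃ w ∈ Metric.closedBall zb ρ,
        ∀ z ∈ Metric.closedBall zb ρ, fval n w ≤ fval n z := by
      intro n
      have hfcont : ContinuousOn (fval n) (Metric.closedBall zb ρ) := by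
        apply ContinuousOn.add
        · exact (Metric.continuous_infDist_pt Omt).comp_continuousOn hΦtcont
        · exact (continuous_const.mul ((continuous_id.sub continuous_const).norm)).continuousOn
      obtain ⟨w, hwmem, hwmin⟩ := (isCompact_closedBall zb ρ).exists_isMinOn
        ⟨zb, Metric.mem_closedBall_self hρpos.le⟩ hfcont
      exact ⟨w, hwmem, fun z hz => hwmin hz⟩
    choose ws hwsmem hwsmin using Hmin
    set tv : ℕ → ℝ := fun n => Metric.infDist (Φt (ws n)) Omt with htvdef
    have htvnn : ∀ n, 0 ≤ tv n := fun n => Metric.infDist_nonneg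
    have hzsball : ∀ n, zs n ∈ Metric.closedBall zb ρ := by
      intro n
      rw [Metric.mem_closedBall, dist_eq_norm]
      have h1 := hzsb n
      have h2 : ρ / ((n:ℝ) + 3) ≤ ρ := by
        rw [div_le_iff₀ (by positivity)]
        nlinarith
      linarith
    have hfzs : ∀ n, fval n (zs n) ≤ ‖Θs n‖ := by
      intro n
      have hm : pl2 (Φ (zs n) + Θs n) (pl2snd (zs n)) ∈ Omt := ⟨(hzsmem n).2, (hzsmem n).1⟩
      have h1 : Metric.infDist (Φt (zs n)) Omt ≤ ‖Θs n‖ := by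
        have h2 := Metric.infDist_le_dist_of_mem (x := Φt (zs n)) hm
        have h3 : dist (Φt (zs n)) (pl2 (Φ (zs n) + Θs n) (pl2snd (zs n))) = ‖Θs n‖ := by
          rw [dist_eq_norm]
          have h4 : Φt (zs n) - pl2 (Φ (zs n) + Θs n) (pl2snd (zs n))
              = pl2 (-(Θs n)) 0 := by
            rw [hΦtdef]
            simp only [pl2_sub]
            congr 1 <;> abel
          rw [h4, pl2_norm_fst, norm_neg]
        linarith [h2, h3.le, h3.ge]
      have h5 : fval n (zs n) = Metric.infDist (Φt (zs n)) Omt := by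
        simp [hfvaldef]
      linarith
    have hval : ∀ n, tv n + (2 / ((n:ℝ) + 3)) * ‖ws n - zs n‖ ≤ ‖Θs n‖ := by
      intro n
      have := (hwsmin n (zs n) (hzsball n)).trans (hfzs n)
      simpa [hfvaldef, htvdef] using this
    have htle : ∀ n, tv n ≤ ‖Θs n‖ := by
      intro n
      have h1 := hval n
      have h2 : 0 ≤ (2 / ((n:ℝ) + 3)) * ‖ws n - zs n‖ := by positivity
      linarith
    have hwz : ∀ n, ‖ws n - zs n‖ ≤ (((n:ℝ) + 3) / 2) * ‖Θs n‖ := by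
      intro n
      have h1 := hval n
      have h2 := htvnn n
      have h3 : (0:ℝ) < 2 / ((n:ℝ) + 3) := by positivity
      have h4 : (2 / ((n:ℝ) + 3)) * ‖ws n - zs n‖ ≤ ‖Θs n‖ := by linarith
      have h5 : (((n:ℝ) + 3) / 2) * (2 / ((n:ℝ) + 3)) = 1 := by
        field_simp
      have h6 := mul_le_mul_of_nonneg_left h4 (by positivity : (0:ℝ) ≤ ((n:ℝ) + 3) / 2)
      calc ‖ws n - zs n‖ = ((((n:ℝ) + 3) / 2) * (2 / ((n:ℝ) + 3))) * ‖ws n - zs n‖ := by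
            rw [h5, one_mul]
        _ = (((n:ℝ) + 3) / 2) * ((2 / ((n:ℝ) + 3)) * ‖ws n - zs n‖) := by ring
        _ ≤ (((n:ℝ) + 3) / 2) * ‖Θs n‖ := h6
    have htpos : ∀ n, 0 < tv n := by
      intro n
      rcases eq_or_lt_of_le (htvnn n) with h0 | h0
      · exfalso
        have hmem : Φt (ws n) ∈ Omt :=
          (hOmtclosed.mem_iff_infDist_zero hOmtne).mpr h0.symm
        have h1 : pl2snd (ws n) ∈ Uset := hmem.2
        have h2 : Φ (ws n) ∈ Om := hmem.1
        have h3 := hfar n (ws n) h1 h2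
        have h4 := hwz n
        have h5 := hrpos n
        have h6 : ((n:ℝ) + 3) * ‖Θs n‖ < (((n:ℝ) + 3) / 2) * ‖Θs n‖ := by
          calc ((n:ℝ) + 3) * ‖Θs n‖ < ‖zs n - ws n‖ := h3
            _ = ‖ws n - zs n‖ := norm_sub_rev _ _
            _ ≤ (((n:ℝ) + 3) / 2) * ‖Θs n‖ := h4
        nlinarith [h5]
      · exact h0
    have hwzb : ∀ n : ℕ, ‖ws n - zb‖ ≤ (3 / 2) * (ρ / ((n:ℝ) + 3)) := by
      intro n
      have h1 := hwz n
      have h2 : ‖Θs n‖ < ρ / (((n:ℝ) + 3) * ((n:ℝ) + 3)) := by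
        have h3 := hrsmall n
        have h4 : (0:ℝ) < (n:ℝ) + 3 := by positivity
        rw [lt_div_iff₀ (by positivity)]
        calc ‖Θs n‖ * (((n:ℝ) + 3) * ((n:ℝ) + 3)) = (((n:ℝ)+3) * ‖Θs n‖) * ((n:ℝ)+3) := by ring
          _ < (ρ / ((n:ℝ) + 3)) * ((n:ℝ)+3) := by
              exact mul_lt_mul_of_pos_right h3 h4
          _ = ρ := by field_simp
      have h5 : ‖ws n - zs n‖ ≤ (1/2) * (ρ / ((n:ℝ)+3)) := by
        calc ‖ws n - zs n‖ ≤ (((n:ℝ) + 3) / 2) * ‖Θs n‖ := h1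
          _ ≤ (((n:ℝ) + 3) / 2) * (ρ / (((n:ℝ) + 3) * ((n:ℝ) + 3))) := by
              exact mul_le_mul_of_nonneg_left h2.le (by positivity)
          _ = (1/2) * (ρ / ((n:ℝ)+3)) := by field_simp
      calc ‖ws n - zb‖ ≤ ‖ws n - zs n‖ + ‖zs n - zb‖ := norm_sub_le_norm_sub_add_norm_sub _ _ _
        _ ≤ (1/2) * (ρ / ((n:ℝ)+3)) + ρ / ((n:ℝ)+3) := by linarith [hzsb n]
        _ = (3/2) * (ρ / ((n:ℝ)+3)) := by ring
    have hwhalf : ∀ n : ℕ, ‖ws n - zb‖ ≤ ρ / 2 := by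
      intro n
      calc ‖ws n - zb‖ ≤ (3/2) * (ρ / ((n:ℝ)+3)) := hwzb n
        _ ≤ ρ / 2 := by
            have h1 : ρ / ((n:ℝ)+3) ≤ ρ / 3 := by
              apply div_le_div_of_nonneg_left hρpos.le (by norm_num)
              have : (0:ℝ) ≤ (n:ℝ) := Nat.cast_nonneg n
              linarith
            linarith
    have Hproj : ∀ n : ℕ, ∃ y ∈ Omt, Metric.infDist (Φt (ws n)) Omt = dist (Φt (ws n)) y :=
      fun n => hOmtclosed.exists_infDist_eq_dist hOmtne (Φt (ws n))
    choose yt hytmem hytdist using Hproj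
    set vt : ℕ → PL2 (Euc d) (Euc nu) := fun n => Φt (ws n) - yt n with hvtdef
    have hvtnorm : ∀ n, ‖vt n‖ = tv n := by
      intro n
      rw [hvtdef]
      simp only
      rw [← dist_eq_norm, ← hytdist n]
    have hprojq : ∀ n : ℕ, ∀ m ∈ Omt, ⟪vt n, m - yt n⟫ ≤ (1/2) * ‖m - yt n‖ ^ 2 := by
      intro n m hm
      have h1 : tv n ≤ dist (Φt (ws n)) m := Metric.infDist_le_dist_of_mem hm
      have h2 : ‖vt n - (m - yt n)‖ = dist (Φt (ws n)) m := by
        rw [dist_eq_norm]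
        congr 1
        rw [hvtdef]
        exact sub_sub_sub_cancel_right _ _ _
      have h3 : ‖vt n‖ ≤ ‖vt n - (m - yt n)‖ := by
        rw [h2, hvtnorm n]; exact h1
      have h4 : ‖vt n - (m - yt n)‖ ^ 2 = ‖vt n‖ ^ 2 - 2 * ⟪vt n, m - yt n⟫ + ‖m - yt n‖ ^ 2 :=
        norm_sub_sq_real _ _
      nlinarith [norm_nonneg (vt n), norm_nonneg (vt n - (m - yt n))]
    set lamn : ℕ → Euc d := fun n => (tv n)⁻¹ • pl2fst (vt n) with hlamndef
    set etan : ℕ → Euc nu := fun n => (tv n)⁻¹ • pl2snd (vt n) with hetandef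
    have hlamNC : ∀ n : ℕ, lamn n ∈ frechetNC Om (pl2fst (yt n)) := by
      intro n
      apply mem_frechetNC_of_quad (c := (tv n)⁻¹) (inv_nonneg.mpr (htvnn n))
      intro y hy
      have hm : pl2 y (pl2snd (yt n)) ∈ Omt := ⟨hy, (hytmem n).2⟩
      have h1 := hprojq n _ hm
      have h2 : pl2 y (pl2snd (yt n)) - yt n = pl2 (y - pl2fst (yt n)) 0 := by
        rw [pl2_sub_eta, sub_self]
      rw [h2] at h1
      have h3 : ⟪vt n, pl2 (y - pl2fst (yt n)) 0⟫ = ⟪pl2fst (vt n), y - pl2fst (yt n)⟫ := by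
        rw [pl2_inner]
        simp
      have h4 : ‖pl2 (y - pl2fst (yt n)) (0 : Euc nu)‖ = ‖y - pl2fst (yt n)‖ := pl2_norm_fst _
      rw [h3, h4] at h1
      rw [hlamndef]
      simp only
      rw [real_inner_smul_left]
      have h5 : (0:ℝ) ≤ (tv n)⁻¹ := inv_nonneg.mpr (htvnn n)
      calc (tv n)⁻¹ * ⟪pl2fst (vt n), y - pl2fst (yt n)⟫
          ≤ (tv n)⁻¹ * ((1/2) * ‖y - pl2fst (yt n)‖ ^ 2) := mul_le_mul_of_nonneg_left h1 h5
        _ ≤ (tv n)⁻¹ * ‖y - pl2fst (yt n)‖ ^ 2 := by nlinarith [sq_nonneg ‖y - pl2fst (yt n)‖]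
    have hetaNC : ∀ n : ℕ, etan n ∈ frechetNC Uset (pl2snd (yt n)) := by
      intro n
      apply mem_frechetNC_of_quad (c := (tv n)⁻¹) (inv_nonneg.mpr (htvnn n))
      intro u hu
      have hm : pl2 (pl2fst (yt n)) u ∈ Omt := ⟨(hytmem n).1, hu⟩
      have h1 := hprojq n _ hm
      have h2 : pl2 (pl2fst (yt n)) u - yt n = pl2 0 (u - pl2snd (yt n)) := by
        rw [pl2_sub_eta, sub_self]
      rw [h2] at h1
      have h3 : ⟪vt n, pl2 (0 : Euc d) (u - pl2snd (yt n))⟫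
          = ⟪pl2snd (vt n), u - pl2snd (yt n)⟫ := by
        rw [pl2_inner]
        simp
      have h4 : ‖pl2 (0 : Euc d) (u - pl2snd (yt n))‖ = ‖u - pl2snd (yt n)‖ := pl2_norm_snd _
      rw [h3, h4] at h1
      rw [hetandef]
      simp only
      rw [real_inner_smul_left]
      have h5 : (0:ℝ) ≤ (tv n)⁻¹ := inv_nonneg.mpr (htvnn n)
      calc (tv n)⁻¹ * ⟪pl2snd (vt n), u - pl2snd (yt n)⟫
          ≤ (tv n)⁻¹ * ((1/2) * ‖u - pl2snd (yt n)‖ ^ 2) := mul_le_mul_of_nonneg_left h1 h5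
        _ ≤ (tv n)⁻¹ * ‖u - pl2snd (yt n)‖ ^ 2 := by nlinarith [sq_nonneg ‖u - pl2snd (yt n)‖]
    have hmaster : ∀ n : ℕ, ∀ z, ‖z - ws n‖ ≤ ρ - ‖ws n - zb‖ →
        0 ≤ 2 * (⟪pl2fst (vt n), Φ z - Φ (ws n)⟫ + ⟪pl2snd (vt n), pl2snd z - pl2snd (ws n)⟫)
          + (Kr + 1) ^ 2 * ‖z - ws n‖ ^ 2
          + 2 * tv n * (2 / ((n:ℝ) + 3)) * ‖z - ws n‖ := by
      intro n z hz
      have hzball : z ∈ Metric.closedBall zb ρ := by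
        rw [Metric.mem_closedBall, dist_eq_norm]
        calc ‖z - zb‖ ≤ ‖z - ws n‖ + ‖ws n - zb‖ := norm_sub_le_norm_sub_add_norm_sub _ _ _
          _ ≤ ρ := by linarith
      set κ : ℝ := 2 / ((n:ℝ) + 3) with hκdef
      have hκpos : 0 < κ := by rw [hκdef]; positivity
      have hminz := hwsmin n z hzball
      have hfw : fval n (ws n) = tv n + κ * ‖ws n - zs n‖ := by simp [hfvaldef, htvdef, hκdef]
      have hb0 : tv n ≤ Metric.infDist (Φt z) Omt + κ * ‖z - ws n‖ := by
        have htri : ‖z - zs n‖ ≤ ‖z - ws n‖ + ‖ws n - zs n‖ :=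
          norm_sub_le_norm_sub_add_norm_sub _ _ _
        have hfz : fval n z = Metric.infDist (Φt z) Omt + κ * ‖z - zs n‖ := by
          simp [hfvaldef, hκdef]
        rw [hfw, hfz] at hminz
        nlinarith [mul_le_mul_of_nonneg_left htri hκpos.le]
      set Δ : PL2 (Euc d) (Euc nu) := Φt z - Φt (ws n) with hΔdef
      have hb1 : tv n ≤ ‖vt n + Δ‖ + κ * ‖z - ws n‖ := by
        have h1 : Metric.infDist (Φt z) Omt ≤ dist (Φt z) (yt n) :=
          Metric.infDist_le_dist_of_mem (hytmem n)
        have h2 : dist (Φt z) (yt n) = ‖vt n + Δ‖ := by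
          rw [dist_eq_norm]
          congr 1
          rw [hvtdef, hΔdef]
          exact (sub_add_sub_cancel' _ _ _).symm
        rw [h2] at h1
        linarith
      have hsq : ‖vt n + Δ‖ ^ 2 = tv n ^ 2 + 2 * ⟪vt n, Δ⟫ + ‖Δ‖ ^ 2 := by
        rw [norm_add_sq_real, hvtnorm n]
      have hstep : 0 ≤ 2 * ⟪vt n, Δ⟫ + ‖Δ‖ ^ 2 + 2 * tv n * κ * ‖z - ws n‖ := by
        have h1 : tv n - κ * ‖z - ws n‖ ≤ ‖vt n + Δ‖ := by linarith
        have h2 := mul_le_mul_of_nonneg_left h1 (by linarith [htvnn n] : (0:ℝ) ≤ 2 * tv n)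
        nlinarith [sq_nonneg (‖vt n + Δ‖ - tv n)]
      have hinnerΔ : ⟪vt n, Δ⟫ = ⟪pl2fst (vt n), Φ z - Φ (ws n)⟫
          + ⟪pl2snd (vt n), pl2snd z - pl2snd (ws n)⟫ := rfl
      have hΔle : ‖Δ‖ ≤ (Kr + 1) * ‖z - ws n‖ := hΦtlip z hzball (ws n) (hwsmem n)
      have hΔsq : ‖Δ‖ ^ 2 ≤ (Kr + 1) ^ 2 * ‖z - ws n‖ ^ 2 := by
        nlinarith [norm_nonneg Δ, norm_nonneg (z - ws n)]
      rw [hinnerΔ] at hstep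
      nlinarith [hstep, hΔsq]
    have haux : Tendsto (fun n : ℕ => ρ / ((n:ℝ) + 3)) atTop (𝓝 0) :=
      Tendsto.div_atTop tendsto_const_nhds
        (tendsto_atTop_add_const_right _ 3 tendsto_natCast_atTop_atTop)
    have htv0 : Tendsto tv atTop (𝓝 0) := by
      apply squeeze_zero htvnn (fun n => ?_) haux
      exact (htle n).trans (hΘs n).le
    have hws0 : Tendsto (fun n => ‖ws n - zb‖) atTop (𝓝 0) := by
      apply squeeze_zero (fun n => norm_nonneg _) hwzb
      have := haux.const_mul (3/2 : ℝ)
      simpa using this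
    have hws_tend : Tendsto ws atTop (𝓝 zb) :=
      tendsto_iff_norm_sub_tendsto_zero.mpr hws0
    have hytb : ∀ n : ℕ, ‖yt n - Φt zb‖ ≤ tv n + (Kr + 1) * ‖ws n - zb‖ := by
      intro n
      have h1 : ‖yt n - Φt (ws n)‖ = tv n := by
        rw [norm_sub_rev]
        exact hvtnorm n
      have h2 : ‖Φt (ws n) - Φt zb‖ ≤ (Kr + 1) * ‖ws n - zb‖ :=
        hΦtlip (ws n) (hwsmem n) zb (Metric.mem_closedBall_self hρpos.le)
      calc ‖yt n - Φt zb‖ ≤ ‖yt n - Φt (ws n)‖ + ‖Φt (ws n) - Φt zb‖ :=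
            norm_sub_le_norm_sub_add_norm_sub _ _ _
        _ ≤ tv n + (Kr + 1) * ‖ws n - zb‖ := by rw [h1]; linarith [h2]
    have hytb0 : Tendsto (fun n => ‖yt n - Φt zb‖) atTop (𝓝 0) := by
      apply squeeze_zero (fun n => norm_nonneg _) hytb
      have h1 := (hws0.const_mul (Kr + 1)).const_add 0
      have h2 := htv0.add (hws0.const_mul (Kr + 1))
      simpa using h2
    have hyfst : Tendsto (fun n => pl2fst (yt n)) atTop (𝓝 (Φ zb)) := by
      apply tendsto_iff_norm_sub_tendsto_zero.mpr
      apply squeeze_zero (fun n => norm_nonneg _) (fun n => ?_) hytb0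
      show ‖pl2fst (yt n) - Φ zb‖ ≤ ‖yt n - Φt zb‖
      have : pl2fst (yt n) - Φ zb = pl2fst (yt n - Φt zb) := rfl
      rw [this]
      exact pl2fst_norm_le _
    have hysnd : Tendsto (fun n => pl2snd (yt n)) atTop (𝓝 ubar) := by
      apply tendsto_iff_norm_sub_tendsto_zero.mpr
      apply squeeze_zero (fun n => norm_nonneg _) (fun n => ?_) hytb0
      show ‖pl2snd (yt n) - ubar‖ ≤ ‖yt n - Φt zb‖
      have : pl2snd (yt n) - ubar = pl2snd (yt n - Φt zb) := rfl
      rw [this]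
      exact pl2snd_norm_le _
    have hpn : ∀ n : ℕ, pl2 (lamn n) (etan n) ∈ Metric.sphere (0 : PL2 (Euc d) (Euc nu)) 1 := by
      intro n
      rw [mem_sphere_zero_iff_norm]
      have h1 : ‖pl2 (lamn n) (etan n)‖ ^ 2 = ‖lamn n‖ ^ 2 + ‖etan n‖ ^ 2 := by
        have := pl2_norm_sq (pl2 (lamn n) (etan n))
        simpa using this
      have h2 : ‖lamn n‖ = (tv n)⁻¹ * ‖pl2fst (vt n)‖ := by
        rw [hlamndef]
        simp only
        rw [norm_smul, Real.norm_eq_abs, abs_of_nonneg (inv_nonneg.mpr (htvnn n))]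
      have h3 : ‖etan n‖ = (tv n)⁻¹ * ‖pl2snd (vt n)‖ := by
        rw [hetandef]
        simp only
        rw [norm_smul, Real.norm_eq_abs, abs_of_nonneg (inv_nonneg.mpr (htvnn n))]
      have h4 : ‖pl2fst (vt n)‖ ^ 2 + ‖pl2snd (vt n)‖ ^ 2 = tv n ^ 2 := by
        rw [← pl2_norm_sq, hvtnorm n]
      have h5 : (tv n)⁻¹ * tv n = 1 := inv_mul_cancel₀ (htpos n).ne'
      have h6 : ‖pl2 (lamn n) (etan n)‖ ^ 2 = 1 := by
        rw [h1, h2, h3]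
        calc ((tv n)⁻¹ * ‖pl2fst (vt n)‖) ^ 2 + ((tv n)⁻¹ * ‖pl2snd (vt n)‖) ^ 2
            = ((tv n)⁻¹) ^ 2 * (‖pl2fst (vt n)‖ ^ 2 + ‖pl2snd (vt n)‖ ^ 2) := by ring
          _ = ((tv n)⁻¹) ^ 2 * tv n ^ 2 := by rw [h4]
          _ = ((tv n)⁻¹ * tv n) ^ 2 := by ring
          _ = 1 := by rw [h5]; norm_num
      exact (pow_left_inj₀ (norm_nonneg _) zero_le_one two_ne_zero).mp (by simpa using h6)
    obtain ⟨p, hpmem, φ, hφmono, hφtend⟩ :=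
      (isCompact_sphere (0 : PL2 (Euc d) (Euc nu)) 1).tendsto_subseq hpn
    set lam : Euc d := pl2fst p with hlamdef
    set eta0 : Euc nu := pl2snd p with heta0def
    have hlamtend : Tendsto (fun k => lamn (φ k)) atTop (𝓝 lam) := by
      have := (pl2fst_continuous.tendsto p).comp hφtend
      exact this
    have hetatend : Tendsto (fun k => etan (φ k)) atTop (𝓝 eta0) := by
      have := (pl2snd_continuous.tendsto p).comp hφtend
      exact this
    have hφtop : Tendsto φ atTop atTop := hφmono.tendsto_atTop
    have hlamNC' : lam ∈ limitingNC Om (Φ (pl2 xbar ubar)) := by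
      refine ⟨fun k => pl2fst (yt (φ k)), fun k => lamn (φ k),
        fun k => ⟨(hytmem (φ k)).1, hlamNC (φ k)⟩, ?_, hlamtend⟩
      exact hyfst.comp hφtop
    have hetaNC' : eta0 ∈ limitingNC Uset ubar := by
      refine ⟨fun k => pl2snd (yt (φ k)), fun k => etan (φ k),
        fun k => ⟨(hytmem (φ k)).2, hetaNC (φ k)⟩, ?_, hetatend⟩
      exact hysnd.comp hφtop
    set εfun : ℕ → ℝ := fun n => 2 / ((n:ℝ) + 3) + Kr * ‖lam - lamn n‖ with hεfundef
    have hεnn : ∀ n, 0 ≤ εfun n := by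
      intro n
      apply add_nonneg (by positivity)
      exact mul_nonneg (by linarith) (norm_nonneg _)
    have haux2 : Tendsto (fun n : ℕ => 2 / ((n:ℝ) + 3)) atTop (𝓝 0) :=
      Tendsto.div_atTop tendsto_const_nhds
        (tendsto_atTop_add_const_right _ 3 tendsto_natCast_atTop_atTop)
    have hεcomp : Tendsto (fun k => εfun (φ k)) atTop (𝓝 0) := by
      have h1 : Tendsto (fun k => 2 / ((φ k : ℝ) + 3)) atTop (𝓝 0) := haux2.comp hφtop
      have h2 : Tendsto (fun k => ‖lam - lamn (φ k)‖) atTop (𝓝 0) := by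
        have h3 := tendsto_iff_norm_sub_tendsto_zero.mp hlamtend
        have h4 : (fun k => ‖lam - lamn (φ k)‖) = fun k => ‖lamn (φ k) - lam‖ := by
          funext k; exact norm_sub_rev _ _
        rw [h4]; exact h3
      have h5 := h1.add (h2.const_mul Kr)
      simpa [hεfundef, mul_comm] using h5
    have hev : ∀ᶠ k in atTop, εfun (φ k) < ρ / 2 :=
      hεcomp.eventually_lt_const (by linarith)
    obtain ⟨K₁, hK₁⟩ := eventually_atTop.mp hev
    have Hpp : ∀ k : ℕ, ∃ w' ζ',
        ‖w' - ws (φ (k + K₁))‖ ≤ εfun (φ (k + K₁)) ∧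
        ζ' ∈ proxSubdiff (fun z => ⟪lam, Φ z⟫) w' ∧
        ‖ζ' - (-(pl2 (0 : Euc nx) (etan (φ (k + K₁)))))‖ ≤ 4 * εfun (φ (k + K₁)) := by
      intro k
      set n : ℕ := φ (k + K₁) with hndef
      set σv : ℝ := max ((Kr + 1) ^ 2 / (2 * tv n)) 1 with hσvdef
      set ρ₀ : ℝ := ρ - ‖ws n - zb‖ with hρ₀def
      have hρ₀half : ρ / 2 ≤ ρ₀ := by
        have := hwhalf n
        rw [hρ₀def]; linarith
      have hρ₀pos : 0 < ρ₀ := by linarith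
      have hεsmall : εfun n < ρ / 2 := hK₁ (k + K₁) (Nat.le_add_left K₁ k)
      have hballsub : Metric.closedBall (ws n) ρ₀ ⊆ Metric.closedBall zb ρ := by
        intro x hx
        rw [Metric.mem_closedBall, dist_eq_norm] at hx ⊢
        calc ‖x - zb‖ ≤ ‖x - ws n‖ + ‖ws n - zb‖ := norm_sub_le_norm_sub_add_norm_sub _ _ _
          _ ≤ ρ := by rw [hρ₀def] at hx; linarith
      apply perturb_prox (fun z => ⟪lam, Φ z⟫) (ws n) (-(pl2 (0 : Euc nx) (etan n)))
        σv (εfun n) ρ₀ (le_max_right _ _) (hεnn n) hρ₀pos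
      · calc εfun n < ρ / 2 := hεsmall
          _ ≤ ρ₀ := hρ₀half
          _ ≤ σv * ρ₀ := le_mul_of_one_le_left hρ₀pos.le (le_max_right _ _)
      · exact continuousOn_const.inner (hΦcont.mono hballsub)
      · intro z hz
        have hzball : z ∈ Metric.closedBall zb ρ := by
          apply hballsub
          rw [Metric.mem_closedBall, dist_eq_norm]
          exact hz
        have hm := hmaster n z (by rw [hρ₀def] at hz; exact hz)
        set dd : ℝ := ‖z - ws n‖ with hdddef
        set P : ℝ := ⟪pl2fst (vt n), Φ z - Φ (ws n)⟫ with hPdef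
        set Q : ℝ := ⟪pl2snd (vt n), pl2snd z - pl2snd (ws n)⟫ with hQdef
        have h2tσ : (Kr + 1) ^ 2 ≤ 2 * tv n * σv := by
          have h1 : (Kr + 1) ^ 2 / (2 * tv n) ≤ σv := le_max_left _ _
          have h2 := mul_le_mul_of_nonneg_left h1
            (by linarith [htpos n] : (0:ℝ) ≤ 2 * tv n)
          have htne : tv n ≠ 0 := (htpos n).ne'
          have h3 : 2 * tv n * ((Kr + 1) ^ 2 / (2 * tv n)) = (Kr + 1) ^ 2 := by
            field_simp
          linarith [h2, h3.le, h3.ge]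
        have hPQ : -(P + Q) ≤ tv n * σv * dd ^ 2 + tv n * (2 / ((n:ℝ) + 3)) * dd := by
          nlinarith [hm, mul_le_mul_of_nonneg_right h2tσ (sq_nonneg dd)]
        have hdiv : -((tv n)⁻¹ * (P + Q)) ≤ σv * dd ^ 2 + (2 / ((n:ℝ) + 3)) * dd := by
          have h6 := mul_le_mul_of_nonneg_left hPQ (inv_nonneg.mpr (htvnn n))
          calc -((tv n)⁻¹ * (P + Q)) = (tv n)⁻¹ * (-(P + Q)) := by ring
            _ ≤ (tv n)⁻¹ * (tv n * σv * dd ^ 2 + tv n * (2 / ((n:ℝ) + 3)) * dd) := h6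
            _ = ((tv n)⁻¹ * tv n) * (σv * dd ^ 2 + (2 / ((n:ℝ) + 3)) * dd) := by ring
            _ = σv * dd ^ 2 + (2 / ((n:ℝ) + 3)) * dd := by
                rw [inv_mul_cancel₀ (htpos n).ne', one_mul]
        have hCS : -(Kr * ‖lam - lamn n‖ * dd) ≤ ⟪lam - lamn n, Φ z - Φ (ws n)⟫ := by
          have h7 := abs_real_inner_le_norm (lam - lamn n) (Φ z - Φ (ws n))
          have h8 : ‖Φ z - Φ (ws n)‖ ≤ Kr * dd := hlip z hzball (ws n) (hwsmem n)
          have h9 : ‖lam - lamn n‖ * ‖Φ z - Φ (ws n)‖ ≤ ‖lam - lamn n‖ * (Kr * dd) :=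
            mul_le_mul_of_nonneg_left h8 (norm_nonneg _)
          have h10 := neg_abs_le ⟪lam - lamn n, Φ z - Φ (ws n)⟫
          nlinarith [h7, h9, h10]
        have hgdiff : ⟪lam, Φ z⟫ - ⟪lam, Φ (ws n)⟫
            = (tv n)⁻¹ * P + ⟪lam - lamn n, Φ z - Φ (ws n)⟫ := by
          rw [← inner_sub_right]
          have h11 : ⟪lam, Φ z - Φ (ws n)⟫
              = ⟪lamn n, Φ z - Φ (ws n)⟫ + ⟪lam - lamn n, Φ z - Φ (ws n)⟫ := by
            rw [← inner_add_left, add_sub_cancel]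
          have h12 : ⟪lamn n, Φ z - Φ (ws n)⟫ = (tv n)⁻¹ * P := by
            rw [hlamndef]
            simp only
            rw [real_inner_smul_left, hPdef]
          rw [h11, h12]
        have hζeq : ⟪-(pl2 (0 : Euc nx) (etan n)), z - ws n⟫ = -((tv n)⁻¹ * Q) := by
          rw [inner_neg_left]
          congr 1
          have h13 : ⟪pl2 (0 : Euc nx) (etan n), z - ws n⟫
              = ⟪etan n, pl2snd z - pl2snd (ws n)⟫ := by
            rw [pl2_inner]
            simp only [pl2fst_pl2, pl2snd_pl2, inner_zero_left, zero_add]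
            rfl
          rw [h13, hetandef]
          simp only
          rw [real_inner_smul_left, hQdef]
        have hsplit : (tv n)⁻¹ * (P + Q) = (tv n)⁻¹ * P + (tv n)⁻¹ * Q := by ring
        have hεv : εfun n = 2 / ((n:ℝ) + 3) + Kr * ‖lam - lamn n‖ := rfl
        have hgoal2 : ⟪lam, Φ (ws n)⟫ + (-((tv n)⁻¹ * Q)) - σv * dd ^ 2 - εfun n * dd
            ≤ ⟪lam, Φ z⟫ := by
          have hεvdd : εfun n * dd = (2 / ((n:ℝ) + 3)) * dd + (Kr * ‖lam - lamn n‖) * dd := by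
            rw [hεv]; ring
          have hKrL : -(Kr * ‖lam - lamn n‖ * dd) ≤ ⟪lam - lamn n, Φ z - Φ (ws n)⟫ := hCS
          linarith [hdiv, hsplit, hgdiff, hεvdd, hKrL]
        calc ⟪lam, Φ (ws n)⟫ + ⟪-(pl2 (0 : Euc nx) (etan n)), z - ws n⟫
              - σv * ‖z - ws n‖ ^ 2 - εfun n * ‖z - ws n‖
            = ⟪lam, Φ (ws n)⟫ + (-((tv n)⁻¹ * Q)) - σv * dd ^ 2 - εfun n * dd := by
              rw [hζeq]
          _ ≤ ⟪lam, Φ z⟫ := hgoal2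
    choose w's ζ's hw'd hmemp hζ'd using Hpp
    have hidx : Tendsto (fun k => φ (k + K₁)) atTop atTop :=
      hφtop.comp (tendsto_add_atTop_nat K₁)
    have htail : Tendsto (fun k => εfun (φ (k + K₁))) atTop (𝓝 0) :=
      hεcomp.comp (tendsto_add_atTop_nat K₁)
    have hwsm : Tendsto (fun k => ‖ws (φ (k + K₁)) - zb‖) atTop (𝓝 0) := hws0.comp hidx
    have hws'0 : Tendsto (fun k => ‖w's k - zb‖) atTop (𝓝 0) := by
      apply squeeze_zero (fun k => norm_nonneg _) (fun k => ?_) (by simpa using htail.add hwsm)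
      calc ‖w's k - zb‖ ≤ ‖w's k - ws (φ (k + K₁))‖ + ‖ws (φ (k + K₁)) - zb‖ :=
            norm_sub_le_norm_sub_add_norm_sub _ _ _
        _ ≤ εfun (φ (k + K₁)) + ‖ws (φ (k + K₁)) - zb‖ := by linarith [hw'd k]
    have hxs : Tendsto w's atTop (𝓝 zb) := tendsto_iff_norm_sub_tendsto_zero.mpr hws'0
    have hw'ball : ∀ k, w's k ∈ Metric.closedBall zb ρ := by
      intro k
      rw [Metric.mem_closedBall, dist_eq_norm]
      have h1 := hw'd k
      have h2 := hwhalf (φ (k + K₁))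
      have h3 : εfun (φ (k + K₁)) < ρ / 2 := hK₁ (k + K₁) (Nat.le_add_left K₁ k)
      calc ‖w's k - zb‖ ≤ ‖w's k - ws (φ (k + K₁))‖ + ‖ws (φ (k + K₁)) - zb‖ :=
            norm_sub_le_norm_sub_add_norm_sub _ _ _
        _ ≤ ρ / 2 + ρ / 2 := add_le_add (h1.trans h3.le) h2
        _ = ρ := by ring
    have hgx : Tendsto (fun k => ⟪lam, Φ (w's k)⟫) atTop (𝓝 ⟪lam, Φ zb⟫) := by
      apply tendsto_iff_norm_sub_tendsto_zero.mpr
      apply squeeze_zero (fun k => norm_nonneg _) (fun k => ?_)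
        (by simpa using hws'0.const_mul (‖lam‖ * Kr))
      show ‖⟪lam, Φ (w's k)⟫ - ⟪lam, Φ zb⟫‖ ≤ ‖lam‖ * Kr * ‖w's k - zb‖
      rw [Real.norm_eq_abs, ← inner_sub_right]
      have h1 := abs_real_inner_le_norm lam (Φ (w's k) - Φ zb)
      have h2 : ‖Φ (w's k) - Φ zb‖ ≤ Kr * ‖w's k - zb‖ :=
        hlip (w's k) (hw'ball k) zb (Metric.mem_closedBall_self hρpos.le)
      have h3 : ‖lam‖ * ‖Φ (w's k) - Φ zb‖ ≤ ‖lam‖ * (Kr * ‖w's k - zb‖) :=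
        mul_le_mul_of_nonneg_left h2 (norm_nonneg _)
      calc |⟪lam, Φ (w's k) - Φ zb⟫| ≤ ‖lam‖ * ‖Φ (w's k) - Φ zb‖ := h1
        _ ≤ ‖lam‖ * (Kr * ‖w's k - zb‖) := h3
        _ = ‖lam‖ * Kr * ‖w's k - zb‖ := by ring
    have hetm : Tendsto (fun k => ‖etan (φ (k + K₁)) - eta0‖) atTop (𝓝 0) := by
      have h1 := hetatend.comp (tendsto_add_atTop_nat K₁)
      exact tendsto_iff_norm_sub_tendsto_zero.mp h1
    have hζs : Tendsto ζ's atTop (𝓝 (-(pl2 (0 : Euc nx) eta0))) := by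
      apply tendsto_iff_norm_sub_tendsto_zero.mpr
      apply squeeze_zero (fun k => norm_nonneg _) (fun k => ?_)
        (by simpa using (htail.const_mul (4:ℝ)).add hetm)
      show ‖ζ's k - (-(pl2 (0 : Euc nx) eta0))‖
          ≤ 4 * εfun (φ (k + K₁)) + ‖etan (φ (k + K₁)) - eta0‖
      have h1 : ‖(-(pl2 (0 : Euc nx) (etan (φ (k + K₁))))) - (-(pl2 (0 : Euc nx) eta0))‖
          = ‖etan (φ (k + K₁)) - eta0‖ := by
        have h2 : (-(pl2 (0 : Euc nx) (etan (φ (k + K₁))))) - (-(pl2 (0 : Euc nx) eta0))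
            = -(pl2 (0 : Euc nx) (etan (φ (k + K₁))) - pl2 (0 : Euc nx) eta0) := by abel
        rw [h2, norm_neg, pl2_sub, sub_self, pl2_norm_snd]
      calc ‖ζ's k - (-(pl2 (0 : Euc nx) eta0))‖
          ≤ ‖ζ's k - (-(pl2 (0 : Euc nx) (etan (φ (k + K₁)))))‖
            + ‖(-(pl2 (0 : Euc nx) (etan (φ (k + K₁))))) - (-(pl2 (0 : Euc nx) eta0))‖ :=
            norm_sub_le_norm_sub_add_norm_sub _ _ _
        _ ≤ 4 * εfun (φ (k + K₁)) + ‖etan (φ (k + K₁)) - eta0‖ := by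
            rw [h1]; linarith [hζ'd k]
    have hmemlim : -(pl2 (0 : Euc nx) eta0) ∈ limSubdiff (fun z => ⟪lam, Φ z⟫) zb :=
      ⟨w's, ζ's, hmemp, hxs, hgx, hζs⟩
    have hme : MultEq Φ Uset xbar ubar lam 0 0 := by
      refine ⟨-(pl2 (0 : Euc nx) eta0), hmemlim, eta0, hetaNC', ?_⟩
      rw [neg_add_cancel]
      exact pl2_zero
    have hlam0 : lam = 0 := hN lam hlamNC' hme
    have hfun0 : (fun z : PL2 (Euc nx) (Euc nu) => ⟪lam, Φ z⟫) = fun _ => (0:ℝ) := by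
      funext z
      rw [hlam0]
      exact inner_zero_left _
    rw [hfun0] at hmemlim
    have hζ0 : -(pl2 (0 : Euc nx) eta0) = 0 := limSubdiff_zero hmemlim
    have heta00 : eta0 = 0 := by
      have h1 : pl2 (0 : Euc nx) eta0 = 0 := neg_eq_zero.mp hζ0
      have h2 : ‖eta0‖ = 0 := by
        rw [← pl2_norm_snd (α := Euc nx) eta0, h1, norm_zero]
      exact norm_eq_zero.mp h2
    have hp1 : ‖p‖ = 1 := mem_sphere_zero_iff_norm.mp hpmem
    have hpz : p = 0 := by
      rw [← pl2_eta p, ← hlamdef, ← heta0def, hlam0, heta00]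
      exact pl2_zero
    rw [hpz, norm_zero] at hp1
    exact zero_ne_one hp1


end Stmt10

end
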